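/- The series u₂(x) = Σ_{odd n ≥ 1} X^(n)(x)/n! converges uniformly on [0,a]: the partial sums of the series converge uniformly on [0,a] to a function u₂ : [0,a] → ℂ. -/

import Mathlib

open MeasureTheory Set Filter

/-- The sequence X̃^(n): X̃^(0) ≡ 1; for n ≥ 1, X̃^(n)(x) = n ∫₀ˣ X̃^(n-1)(ξ) dξ
if n is even, and X̃^(n)(x) = n ∫₀ˣ X̃^(n-1)(ξ) q(ξ) dξ if n is odd. -/
noncomputable def Xtilde (q : ℝ → ℂ) : ℕ → ℝ → ℂ
  | 0 => fun _ => 1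
  | n + 1 => fun x => ((n + 1 : ℕ) : ℂ) *
      ∫ ξ in (0:ℝ)..x, Xtilde q n ξ * (if Even (n + 1) then 1 else q ξ)

/-- The sequence X^(n): X^(0) ≡ 1; for n ≥ 1, X^(n)(x) = n ∫₀ˣ X^(n-1)(ξ) q(ξ) dξ
if n is even, and X^(n)(x) = n ∫₀ˣ X^(n-1)(ξ) dξ if n is odd. -/
noncomputable def Xup (q : ℝ → ℂ) : ℕ → ℝ → ℂ
  | 0 => fun _ => 1
  | n + 1 => fun x => ((n + 1 : ℕ) : ℂ) *
      ∫ ξ in (0:ℝ)..x, Xup q n ξ * (if Even (n + 1) then q ξ else 1)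

lemma Xup_aux (a : ℝ) (ha : 0 ≤ a) (q : ℝ → ℂ) (hq : ContinuousOn q (Set.Icc 0 a))
    (M : ℝ) (hM1 : 1 ≤ M) (hMq : ∀ x ∈ Set.Icc 0 a, ‖q x‖ ≤ M) :
    ∀ n, ContinuousOn (Xup q n) (Set.Icc 0 a) ∧
      ∀ x ∈ Set.Icc 0 a, ‖Xup q n x‖ ≤ (M * x) ^ n := by
  intro n
  induction n with
  | zero => exact ⟨continuousOn_const, fun x _ => by simp [Xup]⟩
  | succ n ih =>
    obtain ⟨ihc, ihb⟩ := ih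
    set g : ℝ → ℂ := fun ξ => Xup q n ξ * (if Even (n + 1) then q ξ else 1) with hg
    have hgc : ContinuousOn g (Set.Icc 0 a) := by
      by_cases h : Even (n + 1) <;> simp only [hg, if_pos, if_neg, h, if_true, if_false]
      · exact ihc.mul hq
      · simpa using ihc
    have hgi : IntegrableOn g (Set.Icc 0 a) := hgc.integrableOn_Icc
    have hgb : ∀ ξ ∈ Set.Icc 0 a, ‖g ξ‖ ≤ M ^ (n + 1) * ξ ^ n := by
      intro ξ hξ
      have h1 : ‖Xup q n ξ‖ ≤ (M * ξ) ^ n := ihb ξ hξ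
      have h2 : ‖(if Even (n + 1) then q ξ else (1:ℂ))‖ ≤ M := by
        split_ifs
        · exact hMq ξ hξ
        · simpa using hM1
      calc ‖g ξ‖ = ‖Xup q n ξ‖ * ‖(if Even (n + 1) then q ξ else (1:ℂ))‖ := norm_mul _ _
        _ ≤ (M * ξ) ^ n * M := by
            exact mul_le_mul h1 h2 (norm_nonneg _)
              (pow_nonneg (mul_nonneg (le_trans zero_le_one hM1) hξ.1) n)
        _ = M ^ (n + 1) * ξ ^ n := by ring
    constructor
    · show ContinuousOn (fun x => ((n + 1 : ℕ) : ℂ) * ∫ ξ in (0:ℝ)..x, g ξ) _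
      have hu : IntegrableOn g (Set.uIcc (0:ℝ) a) volume := by rwa [Set.uIcc_of_le ha]
      have hc := intervalIntegral.continuousOn_primitive_interval hu
      rw [Set.uIcc_of_le ha] at hc
      exact continuousOn_const.mul hc
    · intro x hx
      obtain ⟨hx0, hxa⟩ := hx
      have hsub : Set.Icc (0:ℝ) x ⊆ Set.Icc 0 a := Set.Icc_subset_Icc le_rfl hxa
      have hgi' : IntervalIntegrable g volume 0 x := by
        rw [intervalIntegrable_iff_integrableOn_Icc_of_le hx0]
        exact hgi.mono_set hsub
      have key : ‖∫ ξ in (0:ℝ)..x, g ξ‖ ≤ M ^ (n + 1) * (x ^ (n + 1) / (n + 1)) := by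
        calc ‖∫ ξ in (0:ℝ)..x, g ξ‖ ≤ ∫ ξ in (0:ℝ)..x, ‖g ξ‖ :=
              intervalIntegral.norm_integral_le_integral_norm hx0
          _ ≤ ∫ ξ in (0:ℝ)..x, M ^ (n + 1) * ξ ^ n := by
              apply intervalIntegral.integral_mono_on hx0 hgi'.norm
              · exact (continuous_const.mul (continuous_pow n)).intervalIntegrable 0 x
              · intro ξ hξ; exact hgb ξ (hsub hξ)
          _ = M ^ (n + 1) * (x ^ (n + 1) / (n + 1)) := by
              rw [intervalIntegral.integral_const_mul, integral_pow]
              simp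
      have hXe : Xup q (n + 1) x = ((n + 1 : ℕ) : ℂ) * ∫ ξ in (0:ℝ)..x, g ξ := rfl
      calc ‖Xup q (n + 1) x‖ = ((n:ℝ) + 1) * ‖∫ ξ in (0:ℝ)..x, g ξ‖ := by
            rw [hXe, norm_mul, Complex.norm_natCast]; push_cast; ring
        _ ≤ ((n:ℝ) + 1) * (M ^ (n + 1) * (x ^ (n + 1) / (n + 1))) := by
            apply mul_le_mul_of_nonneg_left key; positivity
        _ = (M * x) ^ (n + 1) := by field_simp; ring


/-- The series u₂(x) = Σ_{odd n ≥ 1} X^(n)(x)/n! converges uniformly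
on [0,a]: its partial sums converge uniformly on [0,a] to a function u₂ : [0,a] → ℂ. -/
theorem stmt_3 (a : ℝ) (ha : 0 < a) (q : ℝ → ℂ) (hq : ContinuousOn q (Set.Icc 0 a)) :
    ∃ u₂ : ℝ → ℂ, TendstoUniformlyOn
      (fun N x => ∑ k ∈ Finset.range N, Xup q (2 * k + 1) x / (Nat.factorial (2 * k + 1) : ℂ))
      u₂ Filter.atTop (Set.Icc 0 a) := by
  obtain ⟨C, hC⟩ := isCompact_Icc.exists_bound_of_continuousOn hq
  set M := max 1 C with hM
  have hM1 : 1 ≤ M := le_max_left _ _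
  have hMq : ∀ x ∈ Set.Icc 0 a, ‖q x‖ ≤ M := fun x hx => (hC x hx).trans (le_max_right _ _)
  have haux := Xup_aux a ha.le q hq M hM1 hMq
  set u : ℕ → ℝ := fun k => (M * a) ^ (2 * k + 1) / (Nat.factorial (2 * k + 1) : ℝ) with hu
  have hsum : Summable u := by
    have h1 : Summable (fun n : ℕ => (M * a) ^ n / (Nat.factorial n : ℝ)) :=
      Real.summable_pow_div_factorial (M * a)
    have hinj : Function.Injective (fun k : ℕ => 2 * k + 1) := by
      intro i j h; simp only at h; omega
    exact h1.comp_injective hinj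
  refine ⟨fun x => ∑' k, Xup q (2 * k + 1) x / (Nat.factorial (2 * k + 1) : ℂ), ?_⟩
  apply tendstoUniformlyOn_tsum_nat hsum
  intro k x hx
  have hb := (haux (2 * k + 1)).2 x hx
  have hMa : 0 ≤ M * x := mul_nonneg (le_trans zero_le_one hM1) hx.1
  have hle : (M * x) ^ (2 * k + 1) ≤ (M * a) ^ (2 * k + 1) :=
    pow_le_pow_left₀ hMa (mul_le_mul_of_nonneg_left hx.2 (le_trans zero_le_one hM1)) _
  rw [norm_div, Complex.norm_natCast]
  exact div_le_div_of_nonneg_right (hb.trans hle) (by positivity) |>.trans_eq rfl
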